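/- Pairwise error bound within a type class: if x⃗ is generated i.i.d. from P_i, the probability of all sequences in the type class T(P_{x⃗}) satisfying D(P_{x⃗}‖P_j) < D(P_{x⃗}‖P_i) is at most 2^{-n·max{D(P_{x⃗}‖P_i), D(P_{x⃗}‖P_j)}}. -/
import Mathlib


open Finset
open scoped Classical

/-- Empirical type of a sequence. -/
noncomputable def typeOf {α : Type*} [Fintype α] [DecidableEq α] {n : ℕ} (xv : Fin n → α) :
    α → ℝ :=
  fun a => ((Finset.univ.filter fun i => xv i = a).card : ℝ) / n

/-- Base-2 KL divergence. -/
noncomputable def KL {α : Type*} [Fintype α] (P Q : α → ℝ) : ℝ :=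
  ∑ x, P x * Real.logb 2 (P x / Q x)

lemma prod_eq_pow_count {α : Type*} [Fintype α] [DecidableEq α] {n : ℕ}
    (xv : Fin n → α) (f : α → ℝ) :
    ∏ k, f (xv k) = ∏ a, f a ^ (Finset.univ.filter fun i => xv i = a).card := by
  rw [← Finset.prod_fiberwise' Finset.univ xv f]
  exact Finset.prod_congr rfl fun a _ => by rw [Finset.prod_const]

lemma typeOf_nonneg {α : Type*} [Fintype α] [DecidableEq α] {n : ℕ} (xv : Fin n → α) (a : α) :
    0 ≤ typeOf xv a := by
  unfold typeOf; positivity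

lemma typeOf_sum_one {α : Type*} [Fintype α] [DecidableEq α] {n : ℕ} (hn : 0 < n)
    (xv : Fin n → α) : ∑ a, typeOf xv a = 1 := by
  unfold typeOf
  rw [← Finset.sum_div]
  rw [div_eq_one_iff_eq (by positivity)]
  rw [← Nat.cast_sum]
  norm_cast
  have h := Finset.card_eq_sum_card_fiberwise (f := xv) (s := (Finset.univ : Finset (Fin n)))
    (t := (Finset.univ : Finset α)) (fun i _ => Finset.mem_univ (xv i))
  simpa using h.symm

lemma key_identity {α : Type*} [Fintype α] [DecidableEq α] {n : ℕ} (hn : 0 < n)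
    (xv : Fin n → α) (Pi : α → ℝ) (hPi0 : ∀ x, 0 < Pi x) :
    ∏ k, Pi (xv k) =
      (2:ℝ) ^ (-(n:ℝ) * KL (typeOf xv) Pi) * ∏ k, typeOf xv (xv k) := by
  have hT : ∀ a, typeOf xv a = (((Finset.univ.filter fun i => xv i = a).card : ℝ)) / n :=
    fun a => rfl
  have hexp : -(n:ℝ) * KL (typeOf xv) Pi
      = ∑ a, (((Finset.univ.filter fun i => xv i = a).card : ℝ))
          * Real.logb 2 (Pi a / typeOf xv a) := by
    unfold KL
    rw [Finset.mul_sum]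
    refine Finset.sum_congr rfl fun a _ => ?_
    have h1 : Real.logb 2 (typeOf xv a / Pi a) = - Real.logb 2 (Pi a / typeOf xv a) := by
      rw [← Real.logb_inv, inv_div]
    rw [h1, hT a]
    have hn' : (n:ℝ) ≠ 0 := Nat.cast_ne_zero.mpr hn.ne'
    field_simp
  rw [hexp, Real.rpow_sum_of_pos (by norm_num : (0:ℝ) < 2),
    prod_eq_pow_count xv Pi, prod_eq_pow_count xv (typeOf xv), ← Finset.prod_mul_distrib]
  refine Finset.prod_congr rfl fun a _ => ?_
  by_cases h0 : (Finset.univ.filter fun i => xv i = a).card = 0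
  · rw [h0]
    norm_num
  · have hTa : 0 < typeOf xv a := by
      rw [hT a]
      have h1 : 0 < (Finset.univ.filter fun i => xv i = a).card := Nat.pos_of_ne_zero h0
      exact div_pos (by exact_mod_cast h1) (by exact_mod_cast hn)
    have h2 : (2:ℝ) ^ ((((Finset.univ.filter fun i => xv i = a).card : ℝ))
          * Real.logb 2 (Pi a / typeOf xv a))
        = (Pi a / typeOf xv a) ^ ((Finset.univ.filter fun i => xv i = a).card) := by
      rw [mul_comm, Real.rpow_mul (by norm_num : (0:ℝ) ≤ 2),
        Real.rpow_logb (by norm_num) (by norm_num) (div_pos (hPi0 a) hTa),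
        Real.rpow_natCast]
    rw [h2, ← mul_pow, div_mul_cancel₀ _ hTa.ne']

theorem stmt15 {α : Type*} [Fintype α] [DecidableEq α] {n : ℕ} (hn : 0 < n)
    (Pi Pj : α → ℝ)
    (hPi0 : ∀ x, 0 < Pi x) (hPi1 : ∑ x, Pi x = 1)
    (hPj0 : ∀ x, 0 < Pj x) (hPj1 : ∑ x, Pj x = 1)
    (T : α → ℝ) (hT : ∃ xv : Fin n → α, typeOf xv = T) :
    (∑ xv : Fin n → α, if typeOf xv = T ∧ KL T Pj < KL T Pi then
        ∏ k, Pi (xv k) else 0) ≤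
      (2:ℝ) ^ (-(n:ℝ) * max (KL T Pi) (KL T Pj)) := by
  obtain ⟨xv0, hxv0⟩ := hT
  have hT0 : ∀ a, 0 ≤ T a := fun a => hxv0 ▸ typeOf_nonneg xv0 a
  have hTsum : ∑ a, T a = 1 := hxv0 ▸ typeOf_sum_one hn xv0
  by_cases hlt : KL T Pj < KL T Pi
  · have hmax : max (KL T Pi) (KL T Pj) = KL T Pi := max_eq_left hlt.le
    rw [hmax]
    calc (∑ xv : Fin n → α, if typeOf xv = T ∧ KL T Pj < KL T Pi then
            ∏ k, Pi (xv k) else 0)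
        ≤ ∑ xv : Fin n → α, (2:ℝ) ^ (-(n:ℝ) * KL T Pi) * ∏ k, T (xv k) := by
          refine Finset.sum_le_sum fun xv _ => ?_
          split_ifs with h
          · obtain ⟨hty, _⟩ := h
            rw [← hty]
            exact le_of_eq (key_identity hn xv Pi hPi0)
          · exact mul_nonneg (Real.rpow_nonneg (by norm_num) _)
              (Finset.prod_nonneg fun k _ => hT0 _)
      _ = (2:ℝ) ^ (-(n:ℝ) * KL T Pi) * ∑ xv : Fin n → α, ∏ k, T (xv k) := by
          rw [Finset.mul_sum]
      _ = (2:ℝ) ^ (-(n:ℝ) * KL T Pi) := by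
          rw [← Fintype.sum_pow T n, hTsum, one_pow, mul_one]
  · have h0 : (∑ xv : Fin n → α, if typeOf xv = T ∧ KL T Pj < KL T Pi then
        ∏ k, Pi (xv k) else 0) = 0 := by
      refine Finset.sum_eq_zero fun xv _ => ?_
      simp [hlt]
    rw [h0]
    positivity
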